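/- Let G be a connected simple graph of order n with minimum degree δ ≥ 2, and let χ(G) denote its chromatic number. Then χ(G) ≤ (2/δ) · GA(G), with equality if and only if G is isomorphic to the complete graph Kₙ. -/

import Mathlib

open Finset SimpleGraph

variable {V : Type*} [Fintype V] [DecidableEq V]

/-- The sum-connectivity index `X(G) = Σ_{uv ∈ E(G)} 1/√(d_u + d_v)`. -/
noncomputable def sumConnIndex (G : SimpleGraph V) [DecidableRel G.Adj] : ℝ :=
  ∑ e ∈ G.edgeFinset, Sym2.lift
    ⟨fun u v => 1 / Real.sqrt ((G.degree u : ℝ) + (G.degree v : ℝ)),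
     fun u v => by dsimp only; rw [add_comm ((G.degree u : ℝ)) ((G.degree v : ℝ))]⟩ e

/-- The Randić index `R(G) = Σ_{uv ∈ E(G)} 1/√(d_u d_v)`. -/
noncomputable def randicIndex (G : SimpleGraph V) [DecidableRel G.Adj] : ℝ :=
  ∑ e ∈ G.edgeFinset, Sym2.lift
    ⟨fun u v => 1 / Real.sqrt ((G.degree u : ℝ) * (G.degree v : ℝ)),
     fun u v => by dsimp only; rw [mul_comm ((G.degree u : ℝ)) ((G.degree v : ℝ))]⟩ e

/-- The harmonic index `H(G) = Σ_{uv ∈ E(G)} 2/(d_u + d_v)`. -/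
noncomputable def harmonicIndex (G : SimpleGraph V) [DecidableRel G.Adj] : ℝ :=
  ∑ e ∈ G.edgeFinset, Sym2.lift
    ⟨fun u v => 2 / ((G.degree u : ℝ) + (G.degree v : ℝ)),
     fun u v => by dsimp only; rw [add_comm ((G.degree u : ℝ)) ((G.degree v : ℝ))]⟩ e

/-- The atom-bond connectivity index `ABC(G) = Σ_{uv ∈ E(G)} √((d_u + d_v − 2)/(d_u d_v))`. -/
noncomputable def abcIndex (G : SimpleGraph V) [DecidableRel G.Adj] : ℝ :=
  ∑ e ∈ G.edgeFinset, Sym2.lift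
    ⟨fun u v => Real.sqrt (((G.degree u : ℝ) + (G.degree v : ℝ) - 2) /
        ((G.degree u : ℝ) * (G.degree v : ℝ))),
     fun u v => by dsimp only; rw [add_comm ((G.degree u : ℝ)) ((G.degree v : ℝ)),
        mul_comm ((G.degree u : ℝ)) ((G.degree v : ℝ))]⟩ e

/-- The first geometric-arithmetic index `GA(G) = Σ_{uv ∈ E(G)} 2√(d_u d_v)/(d_u + d_v)`. -/
noncomputable def geoArithIndex (G : SimpleGraph V) [DecidableRel G.Adj] : ℝ :=
  ∑ e ∈ G.edgeFinset, Sym2.lift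
    ⟨fun u v => 2 * Real.sqrt ((G.degree u : ℝ) * (G.degree v : ℝ)) /
        ((G.degree u : ℝ) + (G.degree v : ℝ)),
     fun u v => by dsimp only; rw [mul_comm ((G.degree u : ℝ)) ((G.degree v : ℝ)),
        add_comm ((G.degree u : ℝ)) ((G.degree v : ℝ))]⟩ e

/-- The augmented Zagreb index `AZI(G) = Σ_{uv ∈ E(G)} (d_u d_v/(d_u + d_v − 2))³`. -/
noncomputable def augZagrebIndex (G : SimpleGraph V) [DecidableRel G.Adj] : ℝ :=
  ∑ e ∈ G.edgeFinset, Sym2.lift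
    ⟨fun u v => ((G.degree u : ℝ) * (G.degree v : ℝ) /
        ((G.degree u : ℝ) + (G.degree v : ℝ) - 2)) ^ 3,
     fun u v => by dsimp only; rw [mul_comm ((G.degree u : ℝ)) ((G.degree v : ℝ)),
        add_comm ((G.degree u : ℝ)) ((G.degree v : ℝ))]⟩ e

/-- The modified second Zagreb index `M₂*(G) = Σ_{uv ∈ E(G)} 1/(d_u d_v)`. -/
noncomputable def modSecondZagrebIndex (G : SimpleGraph V) [DecidableRel G.Adj] : ℝ :=
  ∑ e ∈ G.edgeFinset, Sym2.lift
    ⟨fun u v => 1 / ((G.degree u : ℝ) * (G.degree v : ℝ)),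
     fun u v => by dsimp only; rw [mul_comm ((G.degree u : ℝ)) ((G.degree v : ℝ))]⟩ e

namespace ChromGA


def Gr (G : SimpleGraph V) (s : Finset V) : SimpleGraph V where
  Adj u v := G.Adj u v ∧ u ∈ s ∧ v ∈ s
  symm := ⟨fun _ _ ⟨h, hu, hv⟩ => ⟨h.symm, hv, hu⟩⟩
  loopless := ⟨fun u ⟨h, _⟩ => G.loopless.irrefl u h⟩

instance (G : SimpleGraph V) [DecidableRel G.Adj] (s : Finset V) :
    DecidableRel (Gr G s).Adj := fun _ _ => instDecidableAnd


section PairSum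


noncomputable def pairSum (A : SimpleGraph V) [DecidableRel A.Adj] (f : V → V → ℝ) : ℝ :=
  ∑ u, ∑ w ∈ A.neighborFinset u, f u w

variable (A : SimpleGraph V) [DecidableRel A.Adj]

lemma pairSum_eq_filter (f : V → V → ℝ) :
    pairSum A f = ∑ p ∈ (univ ×ˢ univ).filter (fun p : V × V => A.Adj p.1 p.2), f p.1 p.2 := by
  rw [Finset.sum_filter, Finset.sum_product, pairSum]
  refine Finset.sum_congr rfl fun u _ => ?_
  rw [neighborFinset_eq_filter, Finset.sum_filter]

lemma pairSum_comm (f : V → V → ℝ) : pairSum A f = pairSum A fun u w => f w u := by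
  rw [pairSum_eq_filter, pairSum_eq_filter]
  refine Finset.sum_nbij' (fun p => Prod.swap p) (fun p => Prod.swap p) ?_ ?_ ?_ ?_ ?_ <;>
    simp [adj_comm]

lemma pairSum_nonneg (f : V → V → ℝ) (hf : ∀ u w, A.Adj u w → 0 ≤ f u w) : 0 ≤ pairSum A f := by
  refine Finset.sum_nonneg fun u _ => Finset.sum_nonneg fun w hw => ?_
  exact hf u w ((mem_neighborFinset _ _ _).mp hw)

lemma pairSum_le (f g : V → V → ℝ) (h : ∀ u w, A.Adj u w → f u w ≤ g u w) :
    pairSum A f ≤ pairSum A g := by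
  refine Finset.sum_le_sum fun u _ => Finset.sum_le_sum fun w hw => ?_
  exact h u w ((mem_neighborFinset _ _ _).mp hw)

lemma sum_edgeFinset_lift (f : V → V → ℝ) (hf : ∀ u v, f u v = f v u) :
    2 * ∑ e ∈ A.edgeFinset, Sym2.lift ⟨f, fun u v => by simp [hf u v]⟩ e = pairSum A f := by
  rw [pairSum_eq_filter]
  have key := Finset.sum_fiberwise_of_maps_to (s := (univ ×ˢ univ).filter
      (fun p : V × V => A.Adj p.1 p.2)) (t := A.edgeFinset) (g := fun p : V × V => s(p.1, p.2))
    (fun p hp => by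
      simp only [Finset.mem_filter] at hp
      rw [mem_edgeFinset]; exact hp.2) (fun p => f p.1 p.2)
  rw [← key, Finset.mul_sum]
  refine Finset.sum_congr rfl fun e he => ?_
  induction e with
  | _ a b =>
    have hab : A.Adj a b := by rwa [mem_edgeFinset, mem_edgeSet] at he
    have hfib : ((univ ×ˢ univ).filter (fun p : V × V => A.Adj p.1 p.2)).filter
        (fun p => s(p.1, p.2) = s(a, b)) = {(a, b), (b, a)} := by
      ext ⟨x, y⟩
      simp only [Finset.mem_filter, Finset.mem_insert, Finset.mem_singleton, Finset.mem_product,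
        Finset.mem_univ, true_and, and_true, Sym2.eq_iff, Sym2.mk_eq_mk_iff, Prod.mk.injEq, Prod.swap_prod_mk,
        Prod.ext_iff]
      constructor
      · rintro ⟨_, h | h⟩
        · exact Or.inl ⟨h.1, h.2⟩
        · exact Or.inr ⟨h.1, h.2⟩
      · rintro (⟨rfl, rfl⟩ | ⟨rfl, rfl⟩)
        · exact ⟨hab, Or.inl ⟨rfl, rfl⟩⟩
        · exact ⟨hab.symm, Or.inr ⟨rfl, rfl⟩⟩
    rw [hfib, Finset.sum_pair (by simp [hab.ne, Prod.ext_iff])]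
    simp only [Sym2.lift_mk]
    rw [hf b a]; ring


end PairSum
variable (G : SimpleGraph V) [DecidableRel G.Adj]

@[simp] lemma gr_adj {s : Finset V} {u v : V} :
    (Gr G s).Adj u v ↔ G.Adj u v ∧ u ∈ s ∧ v ∈ s := Iff.rfl

lemma gr_nbr (s : Finset V) (u : V) {w : V} :
    w ∈ (Gr G s).neighborFinset u ↔ G.Adj u w ∧ u ∈ s ∧ w ∈ s := by
  simp [mem_neighborFinset]

lemma gr_nbr_erase {s : Finset V} {v : V} {u : V} (hu : u ≠ v) :
    (Gr G (s.erase v)).neighborFinset u = ((Gr G s).neighborFinset u).erase v := by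
  ext w
  simp only [gr_nbr, Finset.mem_erase]
  tauto

lemma gr_nbr_self_erase {s : Finset V} {v : V} :
    (Gr G (s.erase v)).neighborFinset v = ∅ := by
  ext w; simp [gr_nbr]

lemma gr_nbr_univ (u : V) : (Gr G univ).neighborFinset u = G.neighborFinset u := by
  ext w; simp [gr_nbr, mem_neighborFinset]

lemma gr_degree_le_card {s : Finset V} {u : V} (hu : u ∈ s) :
    (Gr G s).degree u ≤ s.card - 1 := by
  rw [← SimpleGraph.card_neighborFinset_eq_degree]
  have h : (Gr G s).neighborFinset u ⊆ s.erase u := by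
    intro w hw
    rw [gr_nbr] at hw
    exact Finset.mem_erase.mpr ⟨fun h => hw.1.ne h.symm, hw.2.2⟩
  calc ((Gr G s).neighborFinset u).card ≤ (s.erase u).card := Finset.card_le_card h
    _ = s.card - 1 := Finset.card_erase_of_mem hu

noncomputable def dd (s : Finset V) (u : V) : ℝ := ((Gr G s).degree u : ℝ)

lemma dd_nonneg (s : Finset V) (u : V) : 0 ≤ dd G s u := Nat.cast_nonneg _

lemma one_le_dd {s : Finset V} {u w : V} (h : (Gr G s).Adj u w) : 1 ≤ dd G s u := by
  have : 0 < (Gr G s).degree u := by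
    rw [← SimpleGraph.card_neighborFinset_eq_degree]
    exact Finset.card_pos.mpr ⟨w, (mem_neighborFinset _ _ _).mpr h⟩
  unfold dd; exact_mod_cast this

lemma dd_erase_adj {s : Finset V} {v u : V} (hu : u ≠ v) (hadj : (Gr G s).Adj u v) :
    dd G (s.erase v) u = dd G s u - 1 := by
  unfold dd
  rw [← SimpleGraph.card_neighborFinset_eq_degree, ← SimpleGraph.card_neighborFinset_eq_degree,
    gr_nbr_erase G hu, Finset.card_erase_of_mem ((mem_neighborFinset _ _ _).mpr hadj)]
  have h1 : 1 ≤ ((Gr G s).neighborFinset u).card :=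
    Finset.card_pos.mpr ⟨v, (mem_neighborFinset _ _ _).mpr hadj⟩
  push_cast [Nat.cast_sub h1]
  ring

lemma dd_erase_nadj {s : Finset V} {v u : V} (hu : u ≠ v) (hadj : ¬ (Gr G s).Adj u v) :
    dd G (s.erase v) u = dd G s u := by
  unfold dd
  rw [← SimpleGraph.card_neighborFinset_eq_degree, ← SimpleGraph.card_neighborFinset_eq_degree,
    gr_nbr_erase G hu, Finset.erase_eq_of_notMem]
  rw [mem_neighborFinset]; exact hadj



noncomputable def hsum (s : Finset V) : ℝ :=
  pairSum (Gr G s) fun u w => 2 / (dd G s u + dd G s w)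


lemma tA_symm (s : Finset V) (u w : V) :
    2 / (dd G s u + dd G s w) = 2 / (dd G s w + dd G s u) := by rw [add_comm]

lemma hsum_erase_le (s : Finset V) (v : V) (hv : v ∈ s)
    (hmin : ∀ u ∈ s, (Gr G s).degree v ≤ (Gr G s).degree u) :
    hsum G (s.erase v) ≤ hsum G s := by
  classical
  set s' := s.erase v with hs'
  set A := Gr G s with hA
  set B := Gr G s' with hB
  set tA : V → V → ℝ := fun u w => 2 / (dd G s u + dd G s w) with htA
  set tB : V → V → ℝ := fun u w => 2 / (dd G s' u + dd G s' w) with htB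
  set N := A.neighborFinset v with hN
  set c : V → V → ℝ := fun u w =>
    2 / ((dd G s u + dd G s w - 2) * (dd G s u + dd G s w)) with hc
  set PA := (univ ×ˢ univ).filter (fun p : V × V => A.Adj p.1 p.2) with hPA
  set PB := (univ ×ˢ univ).filter (fun p : V × V => B.Adj p.1 p.2) with hPB
  have hdmin : ∀ u ∈ s, dd G s v ≤ dd G s u := fun u hu => Nat.cast_le.mpr (hmin u hu)
  have hcsymm : ∀ u w, c u w = c w u := fun u w => by
    simp only [hc]; rw [add_comm (dd G s u)]
  have hBA : ∀ {u w}, B.Adj u w → A.Adj u w := by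
    rintro u w ⟨h, hu, hw⟩
    exact ⟨h, Finset.mem_of_mem_erase hu, Finset.mem_of_mem_erase hw⟩
  have hsubPB : PB ⊆ PA := fun p hp => by
    simp only [hPA, hPB, Finset.mem_filter] at *
    exact ⟨hp.1, hBA hp.2⟩
  have hsumA : hsum G s = ∑ p ∈ PA, tA p.1 p.2 := pairSum_eq_filter A tA
  have hsumB : hsum G s' = ∑ p ∈ PB, tB p.1 p.2 := pairSum_eq_filter B tB
  set gain : ℝ := ∑ w ∈ N, tA v w with hgain
  -- Step 1: sum over PA \ PB is at least 2 * gain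
  have step1 : 2 * gain ≤ ∑ p ∈ PA \ PB, tA p.1 p.2 := by
    have himg : (N.image fun w => ((v, w) : V × V)) ∪ (N.image fun w => (w, v)) ⊆ PA \ PB := by
      intro p hp
      simp only [Finset.mem_union, Finset.mem_image, hN, mem_neighborFinset] at hp
      have hpA : A.Adj p.1 p.2 ∧ (p.1 = v ∨ p.2 = v) := by
        rcases hp with ⟨w, hw, rfl⟩ | ⟨w, hw, rfl⟩
        · exact ⟨hw, Or.inl rfl⟩
        · exact ⟨hw.symm, Or.inr rfl⟩
      rw [Finset.mem_sdiff]
      constructor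
      · simp only [hPA, Finset.mem_filter, Finset.mem_product, Finset.mem_univ, true_and]
        exact hpA.1
      · simp only [hPB, Finset.mem_filter, Finset.mem_product, Finset.mem_univ, true_and]
        rintro ⟨-, hu, hw⟩
        rcases hpA.2 with h | h
        · exact (Finset.mem_erase.mp hu).1 h
        · exact (Finset.mem_erase.mp hw).1 h
    have hdisj : Disjoint (N.image fun w => ((v, w) : V × V))
        (N.image fun w => ((w, v) : V × V)) := by
      rw [Finset.disjoint_left]
      rintro p hp1 hp2
      simp only [Finset.mem_image, hN, mem_neighborFinset] at hp1 hp2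
      obtain ⟨w1, hw1, rfl⟩ := hp1
      obtain ⟨w2, hw2, h⟩ := hp2
      rw [Prod.ext_iff] at h
      exact (A.ne_of_adj hw2) h.1.symm
    have hsum_union : ∑ p ∈ (N.image fun w => ((v, w) : V × V)) ∪ (N.image fun w => (w, v)),
        tA p.1 p.2 = 2 * gain := by
      rw [Finset.sum_union hdisj,
        Finset.sum_image (by intro a _ b _ h; exact (Prod.ext_iff.mp h).2),
        Finset.sum_image (by intro a _ b _ h; exact (Prod.ext_iff.mp h).1)]
      have h2 : ∑ w ∈ N, tA w v = gain := by
        rw [hgain]; exact Finset.sum_congr rfl fun w _ => tA_symm G s w v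
      rw [h2, hgain]; ring
    calc 2 * gain = _ := hsum_union.symm
      _ ≤ ∑ p ∈ PA \ PB, tA p.1 p.2 := by
          apply Finset.sum_le_sum_of_subset_of_nonneg himg
          intro p _ _
          apply div_nonneg (by norm_num)
          exact add_nonneg (dd_nonneg G s _) (dd_nonneg G s _)
  -- Step 2: pointwise loss bound
  have step2 : ∀ p ∈ PB, tB p.1 p.2 - tA p.1 p.2 ≤
      (if p.1 ∈ N then c p.1 p.2 else 0) + (if p.2 ∈ N then c p.1 p.2 else 0) := by
    rintro ⟨u, w⟩ hp
    simp only [hPB, Finset.mem_filter] at hp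
    have hBadj : B.Adj u w := hp.2
    have hAadj : A.Adj u w := hBA hBadj
    have hune : u ≠ v := (Finset.mem_erase.mp hBadj.2.1).1
    have hwne : w ≠ v := (Finset.mem_erase.mp hBadj.2.2).1
    have hx1 : 1 ≤ dd G s u := one_le_dd G hAadj
    have hy1 : 1 ≤ dd G s w := one_le_dd G hAadj.symm
    by_cases h1 : u ∈ N <;> by_cases h2 : w ∈ N <;>
      simp only [h1, h2, if_true, if_false]
    · -- both in N
      have hadj1 : A.Adj u v := ((mem_neighborFinset _ _ _).mp h1).symm
      have hadj2 : A.Adj w v := ((mem_neighborFinset _ _ _).mp h2).symm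
      have e1 : dd G s' u = dd G s u - 1 := dd_erase_adj G hune hadj1
      have e2 : dd G s' w = dd G s w - 1 := dd_erase_adj G hwne hadj2
      have hx2 : 2 ≤ dd G s u := by
        have := one_le_dd G hBadj; rw [e1] at this; linarith
      have hy2 : 2 ≤ dd G s w := by
        have := one_le_dd G hBadj.symm; rw [e2] at this; linarith
      simp only [htB, htA, hc, e1, e2]
      have hne1 : dd G s u - 1 + (dd G s w - 1) ≠ 0 := by linarith
      have hne2 : dd G s u + dd G s w ≠ 0 := by linarith
      have hne3 : dd G s u + dd G s w - 2 ≠ 0 := by linarith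
      apply le_of_eq
      field_simp
      ring
    · -- only u in N
      have hadj1 : A.Adj u v := ((mem_neighborFinset _ _ _).mp h1).symm
      have hnadj2 : ¬ A.Adj w v := fun h => h2 ((mem_neighborFinset _ _ _).mpr h.symm)
      have e1 : dd G s' u = dd G s u - 1 := dd_erase_adj G hune hadj1
      have e2 : dd G s' w = dd G s w := dd_erase_nadj G hwne hnadj2
      have hx2 : 2 ≤ dd G s u := by
        have := one_le_dd G hBadj; rw [e1] at this; linarith
      simp only [htB, htA, hc, e1, e2, add_zero]
      have hpos2 : (0:ℝ) < dd G s u + dd G s w := by linarith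
      have hpos3 : (0:ℝ) < dd G s u + dd G s w - 1 := by linarith
      have hne1 : dd G s u - 1 + dd G s w ≠ 0 := by linarith
      have hne2 : dd G s u + dd G s w ≠ 0 := by linarith
      have heq : 2 / (dd G s u - 1 + dd G s w) - 2 / (dd G s u + dd G s w)
          = 2 / ((dd G s u + dd G s w - 1) * (dd G s u + dd G s w)) := by
        rw [div_sub_div _ _ hne1 hne2]
        rw [div_eq_div_iff (by nlinarith) (by nlinarith)]
        ring
      rw [heq]
      apply div_le_div_of_nonneg_left (by norm_num) (by nlinarith)
      nlinarith
    · -- only w in N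
      have hadj2 : A.Adj w v := ((mem_neighborFinset _ _ _).mp h2).symm
      have hnadj1 : ¬ A.Adj u v := fun h => h1 ((mem_neighborFinset _ _ _).mpr h.symm)
      have e1 : dd G s' u = dd G s u := dd_erase_nadj G hune hnadj1
      have e2 : dd G s' w = dd G s w - 1 := dd_erase_adj G hwne hadj2
      have hy2 : 2 ≤ dd G s w := by
        have := one_le_dd G hBadj.symm; rw [e2] at this; linarith
      simp only [htB, htA, hc, e1, e2, zero_add]
      have hpos2 : (0:ℝ) < dd G s u + dd G s w := by linarith
      have hpos3 : (0:ℝ) < dd G s u + dd G s w - 1 := by linarith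
      have hne1 : dd G s u + (dd G s w - 1) ≠ 0 := by linarith
      have hne2 : dd G s u + dd G s w ≠ 0 := by linarith
      have heq : 2 / (dd G s u + (dd G s w - 1)) - 2 / (dd G s u + dd G s w)
          = 2 / ((dd G s u + dd G s w - 1) * (dd G s u + dd G s w)) := by
        rw [div_sub_div _ _ hne1 hne2]
        rw [div_eq_div_iff (by nlinarith) (by nlinarith)]
        ring
      rw [heq]
      apply div_le_div_of_nonneg_left (by norm_num) (by nlinarith)
      nlinarith
    · -- neither
      have hnadj1 : ¬ A.Adj u v := fun h => h1 ((mem_neighborFinset _ _ _).mpr h.symm)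
      have hnadj2 : ¬ A.Adj w v := fun h => h2 ((mem_neighborFinset _ _ _).mpr h.symm)
      have e1 : dd G s' u = dd G s u := dd_erase_nadj G hune hnadj1
      have e2 : dd G s' w = dd G s w := dd_erase_nadj G hwne hnadj2
      simp only [htB, htA, e1, e2, add_zero, sub_self, le_refl]
  -- Step 3: swap symmetry
  have step3 : ∑ p ∈ PB, (if p.2 ∈ N then c p.1 p.2 else 0)
      = ∑ p ∈ PB, (if p.1 ∈ N then c p.1 p.2 else 0) := by
    refine Finset.sum_nbij' (fun p => Prod.swap p) (fun p => Prod.swap p) ?_ ?_ ?_ ?_ ?_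
    · intro p hp
      simp only [hPB, Finset.mem_filter, Finset.mem_product, Finset.mem_univ, true_and] at *
      exact hp.symm
    · intro p hp
      simp only [hPB, Finset.mem_filter, Finset.mem_product, Finset.mem_univ, true_and] at *
      exact hp.symm
    · intro p _; exact Prod.swap_swap p
    · intro p _; exact Prod.swap_swap p
    · intro p _
      simp only [Prod.fst_swap, Prod.snd_swap]
      rw [hcsymm p.2 p.1]
  -- Step 4: per-u bound
  have step4 : ∑ p ∈ PB, (if p.1 ∈ N then c p.1 p.2 else 0) ≤ gain := by
    have h0 := pairSum_eq_filter B (fun u w => if u ∈ N then c u w else 0)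
    rw [← hPB] at h0
    rw [← h0]
    have h1 : pairSum B (fun u w => if u ∈ N then c u w else 0)
        = ∑ u ∈ N, ∑ w ∈ B.neighborFinset u, c u w := by
      rw [pairSum]
      have h2 : ∀ u : V, (∑ w ∈ B.neighborFinset u, if u ∈ N then c u w else 0)
          = if u ∈ N then ∑ w ∈ B.neighborFinset u, c u w else 0 := by
        intro u; split_ifs <;> simp
      rw [Finset.sum_congr rfl fun u _ => h2 u, Finset.sum_ite_mem, Finset.univ_inter]
    rw [h1, hgain]
    apply Finset.sum_le_sum
    intro u hu
    have hAvu : A.Adj v u := (mem_neighborFinset _ _ _).mp hu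
    have hune : u ≠ v := fun h => A.ne_of_adj hAvu h.symm
    have hd1 : 1 ≤ dd G s v := one_le_dd G hAvu
    have hx1 : 1 ≤ dd G s u := one_le_dd G hAvu.symm
    have hNBu : B.neighborFinset u = (A.neighborFinset u).erase v := gr_nbr_erase G hune
    have htAvu : tA v u = 2 / (dd G s v + dd G s u) := rfl
    rcases Finset.eq_empty_or_nonempty (B.neighborFinset u) with hemp | ⟨w0, hw0⟩
    · rw [hemp, Finset.sum_empty, htAvu]
      apply div_nonneg (by norm_num)
      linarith
    · have hw0' : w0 ∈ (A.neighborFinset u).erase v := hNBu ▸ hw0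
      have hw0v : w0 ≠ v := (Finset.mem_erase.mp hw0').1
      have hx2 : 2 ≤ dd G s u := by
        have hsub : ({v, w0} : Finset V) ⊆ A.neighborFinset u := by
          intro z hz
          rcases Finset.mem_insert.mp hz with rfl | hz
          · exact (mem_neighborFinset _ _ _).mpr hAvu.symm
          · rw [Finset.mem_singleton] at hz; subst hz
            exact Finset.mem_of_mem_erase hw0'
        have hcard : ({v, w0} : Finset V).card = 2 := Finset.card_pair (Ne.symm hw0v)
        have := Finset.card_le_card hsub
        rw [hcard, SimpleGraph.card_neighborFinset_eq_degree] at this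
        unfold dd
        exact_mod_cast this
      have hposd : (0:ℝ) < (dd G s u + dd G s v - 2) * (dd G s u + dd G s v) := by nlinarith
      have hbound : ∀ w ∈ B.neighborFinset u,
          c u w ≤ 2 / ((dd G s u + dd G s v - 2) * (dd G s u + dd G s v)) := by
        intro w hw
        have hw2 : G.Adj u w ∧ u ∈ s' ∧ w ∈ s' := (gr_nbr G s' u).mp hw
        have hy : dd G s v ≤ dd G s w := hdmin w (Finset.mem_of_mem_erase hw2.2.2)
        simp only [hc]
        apply div_le_div_of_nonneg_left (by norm_num) hposd
        apply mul_le_mul (by linarith) (by linarith) (by linarith) (by nlinarith)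
      have hcardNB : ((B.neighborFinset u).card : ℝ) = dd G s u - 1 := by
        rw [hNBu, Finset.card_erase_of_mem ((mem_neighborFinset _ _ _).mpr hAvu.symm)]
        have hge : 1 ≤ (A.neighborFinset u).card := Finset.card_pos.mpr
          ⟨v, (mem_neighborFinset _ _ _).mpr hAvu.symm⟩
        rw [Nat.cast_sub hge, Nat.cast_one]
        unfold dd
        rw [SimpleGraph.card_neighborFinset_eq_degree]
      calc ∑ w ∈ B.neighborFinset u, c u w
          ≤ (B.neighborFinset u).card • (2 / ((dd G s u + dd G s v - 2) * (dd G s u + dd G s v)))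
            := Finset.sum_le_card_nsmul _ _ _ hbound
        _ = (dd G s u - 1) * (2 / ((dd G s u + dd G s v - 2) * (dd G s u + dd G s v))) := by
            rw [nsmul_eq_mul, hcardNB]
        _ ≤ (dd G s u + dd G s v - 2) * (2 / ((dd G s u + dd G s v - 2) * (dd G s u + dd G s v)))
            := by
            apply mul_le_mul_of_nonneg_right (by linarith)
            apply div_nonneg (by norm_num) (le_of_lt hposd)
        _ = 2 / (dd G s u + dd G s v) := by
            have h1 : dd G s u + dd G s v - 2 ≠ 0 := by
              intro h; linarith [hx2, hd1]
            have h2 : dd G s u + dd G s v ≠ 0 := ne_of_gt (by linarith)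
            field_simp
        _ = tA v u := by rw [htAvu, add_comm]
  -- assemble
  have core : ∑ p ∈ PB, (tB p.1 p.2 - tA p.1 p.2) ≤ 2 * gain := by
    calc ∑ p ∈ PB, (tB p.1 p.2 - tA p.1 p.2)
        ≤ ∑ p ∈ PB, ((if p.1 ∈ N then c p.1 p.2 else 0) + (if p.2 ∈ N then c p.1 p.2 else 0)) :=
          Finset.sum_le_sum step2
      _ = ∑ p ∈ PB, (if p.1 ∈ N then c p.1 p.2 else 0)
          + ∑ p ∈ PB, (if p.2 ∈ N then c p.1 p.2 else 0) := Finset.sum_add_distrib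
      _ = 2 * ∑ p ∈ PB, (if p.1 ∈ N then c p.1 p.2 else 0) := by rw [step3]; ring
      _ ≤ 2 * gain := by linarith [step4]
  have hsplit : ∑ p ∈ PA, tA p.1 p.2
      = ∑ p ∈ PA \ PB, tA p.1 p.2 + ∑ p ∈ PB, tA p.1 p.2 := (Finset.sum_sdiff hsubPB).symm
  have hPBsub : ∑ p ∈ PB, tB p.1 p.2
      = ∑ p ∈ PB, tA p.1 p.2 + ∑ p ∈ PB, (tB p.1 p.2 - tA p.1 p.2) := by
    rw [← Finset.sum_add_distrib]
    exact Finset.sum_congr rfl fun p _ => by ring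
  rw [hsumA, hsumB, hPBsub, hsplit]
  linarith [step1, core]

lemma colorable_extend {s : Finset V} {v : V} {m : ℕ}
    (h : (Gr G (s.erase v)).Colorable m) (hd : (Gr G s).degree v < m) :
    (Gr G s).Colorable m := by
  classical
  obtain ⟨C⟩ := h
  set N := (Gr G s).neighborFinset v with hN
  have hcard : (N.image C).card < m := by
    calc (N.image C).card ≤ N.card := Finset.card_image_le
      _ = (Gr G s).degree v := SimpleGraph.card_neighborFinset_eq_degree _ _
      _ < m := hd
  obtain ⟨c0, hc0⟩ : ∃ c0 : Fin m, c0 ∉ N.image C := by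
    by_contra h'
    push_neg at h'
    have hsub : (univ : Finset (Fin m)) ⊆ N.image C := fun c _ => h' c
    have := Finset.card_le_card hsub
    rw [Finset.card_univ, Fintype.card_fin] at this
    omega
  refine ⟨SimpleGraph.Coloring.mk (fun x => if x = v then c0 else C x) ?_⟩
  rintro a b hab
  have hne : a ≠ b := (Gr G s).ne_of_adj hab
  by_cases ha : a = v <;> by_cases hb : b = v
  · exact absurd (ha.trans hb.symm) hne
  · subst ha
    rw [if_pos rfl, if_neg hb]
    intro hcontra
    exact hc0 (hcontra ▸ Finset.mem_image_of_mem C ((mem_neighborFinset _ _ _).mpr hab))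
  · subst hb
    rw [if_pos rfl, if_neg ha]
    intro hcontra
    exact hc0 (hcontra.symm ▸ Finset.mem_image_of_mem C ((mem_neighborFinset _ _ _).mpr hab.symm))
  · simp only [if_neg ha, if_neg hb]
    apply C.valid
    obtain ⟨hadj, has, hbs⟩ := hab
    exact ⟨hadj, Finset.mem_erase.mpr ⟨ha, has⟩, Finset.mem_erase.mpr ⟨hb, hbs⟩⟩

lemma exists_good : ∀ (n : ℕ) (s : Finset V), s.card ≤ n →
    ∃ (k : ℕ) (t : Finset V), t ⊆ s ∧ (Gr G s).Colorable (k+1) ∧ hsum G t ≤ hsum G s ∧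
      (k ≠ 0 → t.Nonempty ∧ ∀ u ∈ t, k ≤ (Gr G t).degree u) := by
  intro n
  induction n with
  | zero =>
    intro s hs
    have : s = ∅ := Finset.card_eq_zero.mp (Nat.le_zero.mp hs)
    subst this
    refine ⟨0, ∅, subset_rfl, ⟨SimpleGraph.Coloring.mk (fun _ => 0) ?_⟩, le_refl _,
      fun h => absurd rfl h⟩
    rintro a b ⟨-, ha, -⟩
    exact absurd ha (Finset.notMem_empty a)
  | succ n ih =>
    intro s hs
    rcases Finset.eq_empty_or_nonempty s with rfl | hne
    · refine ⟨0, ∅, subset_rfl, ⟨SimpleGraph.Coloring.mk (fun _ => 0) ?_⟩, le_refl _,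
        fun h => absurd rfl h⟩
      rintro a b ⟨-, ha, -⟩
      exact absurd ha (Finset.notMem_empty a)
    · obtain ⟨v, hv, hminv⟩ := Finset.exists_min_image s (fun u => (Gr G s).degree u) hne
      have hcard' : (s.erase v).card ≤ n := by
        have := Finset.card_erase_of_mem hv
        have hpos : 1 ≤ s.card := Finset.card_pos.mpr hne
        omega
      obtain ⟨k', t', ht's, hcol', hhs', hprop'⟩ := ih (s.erase v) hcard'
      have hdel := hsum_erase_le G s v hv hminv
      by_cases hcase : k' ≤ (Gr G s).degree v
      · refine ⟨(Gr G s).degree v, s, subset_rfl, ?_, le_refl _, fun _ => ⟨hne, hminv⟩⟩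
        exact colorable_extend G (hcol'.mono (by omega)) (by omega)
      · refine ⟨k', t', ht's.trans (Finset.erase_subset _ _), ?_,
          le_trans hhs' hdel, hprop'⟩
        exact colorable_extend G hcol' (by omega)

lemma hsum_lower (t : Finset V) (k : ℕ) (hk : 1 ≤ k) (htne : t.Nonempty)
    (hdeg : ∀ u ∈ t, k ≤ (Gr G t).degree u) : (k + 1 : ℝ) ≤ hsum G t := by
  classical
  set C : ℝ := (t.card : ℝ) - 1 with hC
  have htpos : 1 ≤ t.card := Finset.card_pos.mpr htne
  have hC0 : 0 ≤ C := by
    rw [hC]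
    have : (1:ℝ) ≤ (t.card : ℝ) := by exact_mod_cast htpos
    linarith
  have hkC : (k : ℝ) ≤ C := by
    obtain ⟨u0, hu0⟩ := htne
    have h1 : k ≤ (Gr G t).degree u0 := hdeg u0 hu0
    have h2 : (Gr G t).degree u0 ≤ t.card - 1 := gr_degree_le_card G hu0
    have : k ≤ t.card - 1 := le_trans h1 h2
    rw [hC]
    have := (Nat.cast_le (α := ℝ)).mpr this
    rw [Nat.cast_sub htpos] at this
    simpa using this
  have hkR : (1:ℝ) ≤ (k:ℝ) := by exact_mod_cast hk
  have hddk : ∀ u ∈ t, (k:ℝ) ≤ dd G t u := fun u hu => by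
    unfold dd; exact_mod_cast hdeg u hu
  have hddC : ∀ w ∈ t, dd G t w ≤ C := fun w hw => by
    have := gr_degree_le_card G hw
    unfold dd
    rw [hC]
    have h2 := (Nat.cast_le (α := ℝ)).mpr this
    rw [Nat.cast_sub htpos] at h2
    simpa using h2
  have step : ∀ u ∈ t, (2 * k / ((k:ℝ) + C)) ≤ ∑ w ∈ (Gr G t).neighborFinset u,
      2 / (dd G t u + dd G t w) := by
    intro u hu
    have hxk : (k:ℝ) ≤ dd G t u := hddk u hu
    have hinner : ∀ w ∈ (Gr G t).neighborFinset u, 2 / (dd G t u + C)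
        ≤ 2 / (dd G t u + dd G t w) := by
      intro w hw
      have hwt : w ∈ t := ((gr_nbr G t u).mp hw).2.2
      apply div_le_div_of_nonneg_left (by norm_num)
        (by linarith [dd_nonneg G t w, hkR]) (by linarith [hddC w hwt])
    have hcnt : ((Gr G t).neighborFinset u).card • (2 / (dd G t u + C))
        ≤ ∑ w ∈ (Gr G t).neighborFinset u, 2 / (dd G t u + dd G t w) :=
      Finset.card_nsmul_le_sum _ _ _ hinner
    have hcnt' : ((Gr G t).neighborFinset u).card • (2 / (dd G t u + C))
        = dd G t u * (2 / (dd G t u + C)) := by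
      rw [nsmul_eq_mul, SimpleGraph.card_neighborFinset_eq_degree]
      rfl
    refine le_trans ?_ (hcnt' ▸ hcnt)
    have hrw : dd G t u * (2 / (dd G t u + C)) = 2 * dd G t u / (dd G t u + C) := by ring
    rw [hrw, div_le_div_iff₀ (by linarith) (by linarith)]
    nlinarith [mul_nonneg hC0 (sub_nonneg.mpr hxk)]
  have hrestrict : ∑ u ∈ t, (2 * k / ((k:ℝ) + C)) ≤ hsum G t := by
    rw [hsum, pairSum]
    refine le_trans (Finset.sum_le_sum step) ?_
    apply Finset.sum_le_sum_of_subset_of_nonneg (Finset.subset_univ t)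
    intro u _ _
    apply Finset.sum_nonneg
    intro w _
    apply div_nonneg (by norm_num) (add_nonneg (dd_nonneg G t u) (dd_nonneg G t w))
  rw [Finset.sum_const, nsmul_eq_mul] at hrestrict
  refine le_trans ?_ hrestrict
  have hcR : (1:ℝ) ≤ (t.card : ℝ) := by exact_mod_cast htpos
  have hCt : (t.card : ℝ) = C + 1 := by rw [hC]; ring
  have h1 : (0:ℝ) < (k:ℝ) + C := by linarith
  rw [hCt, show (C+1) * (2*(k:ℝ)/((k:ℝ)+C)) = ((C+1)*(2*(k:ℝ)))/((k:ℝ)+C) from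
    (mul_div_assoc _ _ _).symm, le_div_iff₀ h1]
  nlinarith [mul_nonneg (sub_nonneg.mpr hkR) (sub_nonneg.mpr hkC)]

lemma dd_univ (u : V) : dd G univ u = (G.degree u : ℝ) := by
  unfold dd
  congr 1
  rw [← SimpleGraph.card_neighborFinset_eq_degree, ← SimpleGraph.card_neighborFinset_eq_degree,
    gr_nbr_univ]

lemma hsum_univ :
    hsum G univ = pairSum G (fun u w => 2 / ((G.degree u : ℝ) + (G.degree w : ℝ))) := by
  rw [hsum, pairSum, pairSum]
  refine Finset.sum_congr rfl fun u _ => ?_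
  rw [gr_nbr_univ]
  exact Finset.sum_congr rfl fun w _ => by rw [dd_univ, dd_univ]

lemma two_ga : 2 * geoArithIndex G = pairSum G
    (fun u w => 2 * Real.sqrt ((G.degree u : ℝ) * (G.degree w : ℝ)) /
      ((G.degree u : ℝ) + (G.degree w : ℝ))) := by
  rw [geoArithIndex]
  exact sum_edgeFinset_lift G _ (fun u v => by
    rw [mul_comm ((G.degree u : ℝ)) ((G.degree v : ℝ)),
      add_comm ((G.degree u : ℝ)) ((G.degree v : ℝ))])

-- pointwise inequalities
lemma pt_h_le_r {x y : ℝ} (hx : 1 ≤ x) (hy : 1 ≤ y) :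
    2 / (x + y) ≤ 1 / Real.sqrt (x * y) := by
  have hx0 : (0:ℝ) < x := by linarith
  have hy0 : (0:ℝ) < y := by linarith
  have ht : 0 < Real.sqrt (x * y) := Real.sqrt_pos.mpr (by positivity)
  rw [div_le_div_iff₀ (by linarith) ht]
  have h1 : Real.sqrt (x * y) = Real.sqrt x * Real.sqrt y := Real.sqrt_mul (le_of_lt hx0) y
  have h2 : Real.sqrt x ^ 2 = x := Real.sq_sqrt (le_of_lt hx0)
  have h3 : Real.sqrt y ^ 2 = y := Real.sq_sqrt (le_of_lt hy0)
  nlinarith [sq_nonneg (Real.sqrt x - Real.sqrt y)]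

lemma pt_r_le_ga {d x y : ℝ} (hd : 2 ≤ d) (hx : d ≤ x) (hy : d ≤ y) :
    1 / Real.sqrt (x * y) ≤ (1 / d) * (2 * Real.sqrt (x * y) / (x + y)) := by
  have hd0 : (0:ℝ) < d := by linarith
  have hx0 : (0:ℝ) < x := by linarith
  have hy0 : (0:ℝ) < y := by linarith
  have ht : 0 < Real.sqrt (x * y) := Real.sqrt_pos.mpr (by positivity)
  have ht2 : Real.sqrt (x * y) * Real.sqrt (x * y) = x * y :=
    Real.mul_self_sqrt (by positivity)
  have hrw : (1 / d) * (2 * Real.sqrt (x * y) / (x + y))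
      = 2 * Real.sqrt (x * y) / (d * (x + y)) := by
    field_simp
  rw [hrw, div_le_div_iff₀ ht (by positivity)]
  nlinarith [mul_nonneg (sub_nonneg.mpr hx) (le_of_lt hy0),
    mul_nonneg (sub_nonneg.mpr hy) (le_of_lt hx0)]

lemma pt_eq_of_eq {d x y : ℝ} (hd : 2 ≤ d) (hx : d ≤ x) (hy : d ≤ y)
    (heq : (1 / d) * (2 * Real.sqrt (x * y) / (x + y)) = 1 / Real.sqrt (x * y)) :
    x = d ∧ y = d := by
  have hd0 : (0:ℝ) < d := by linarith
  have hx0 : (0:ℝ) < x := by linarith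
  have hy0 : (0:ℝ) < y := by linarith
  have ht : 0 < Real.sqrt (x * y) := Real.sqrt_pos.mpr (by positivity)
  have ht2 : Real.sqrt (x * y) * Real.sqrt (x * y) = x * y :=
    Real.mul_self_sqrt (by positivity)
  have hrw : (1 / d) * (2 * Real.sqrt (x * y) / (x + y))
      = 2 * Real.sqrt (x * y) / (d * (x + y)) := by field_simp
  rw [hrw, div_eq_div_iff (by positivity) (ne_of_gt ht)] at heq
  have hkey : 2 * (x * y) = d * (x + y) := by nlinarith
  constructor
  · nlinarith [mul_nonneg (sub_nonneg.mpr hx) (sub_nonneg.mpr hy)]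
  · nlinarith [mul_nonneg (sub_nonneg.mpr hx) (sub_nonneg.mpr hy)]

end ChromGA

open ChromGA

variable (G : SimpleGraph V) [DecidableRel G.Adj]

theorem stmt9 (hG : G.Connected) (n : ℕ) (hn : Fintype.card V = n)
    (hδ : 2 ≤ G.minDegree) :
    (G.chromaticNumber.toNat : ℝ) ≤ 2 / (G.minDegree : ℝ) * geoArithIndex G ∧
    ((G.chromaticNumber.toNat : ℝ) = 2 / (G.minDegree : ℝ) * geoArithIndex G ↔
      Nonempty (G ≃g completeGraph (Fin n))) := by
  classical
  have hVne : Nonempty V := hG.nonempty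
  set δR : ℝ := (G.minDegree : ℝ) with hδR
  have hδ2 : (2:ℝ) ≤ δR := by rw [hδR]; exact_mod_cast hδ
  have hδ0 : (0:ℝ) < δR := by linarith
  have hfin : G.chromaticNumber ≠ ⊤ :=
    ne_top_of_le_ne_top (by simp) G.colorable_of_fintype.chromaticNumber_le
  set χn : ℕ := G.chromaticNumber.toNat with hχn
  have hχle : ∀ m : ℕ, G.Colorable m → χn ≤ m := by
    intro m hm
    have h := hm.chromaticNumber_le
    rw [← ENat.coe_toNat hfin] at h
    exact_mod_cast h
  have hdegδ : ∀ u : V, δR ≤ (G.degree u : ℝ) := fun u => by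
    rw [hδR]; exact_mod_cast G.minDegree_le_degree u
  have hdeg1 : ∀ u : V, (1:ℝ) ≤ (G.degree u : ℝ) := fun u => le_trans (by linarith) (hdegδ u)
  set hf : V → V → ℝ := fun u w => 2 / ((G.degree u : ℝ) + (G.degree w : ℝ)) with hhf
  set rf : V → V → ℝ := fun u w => 1 / Real.sqrt ((G.degree u : ℝ) * (G.degree w : ℝ)) with hrf
  set gf : V → V → ℝ := fun u w => 2 * Real.sqrt ((G.degree u : ℝ) * (G.degree w : ℝ)) /
      ((G.degree u : ℝ) + (G.degree w : ℝ)) with hgf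
  obtain ⟨k, t, hts, hcolk, hht, hprop⟩ := exists_good G (Fintype.card V) univ
    (le_of_eq Finset.card_univ)
  have hle : G ≤ Gr G univ := by
    intro u w h
    exact ⟨h, Finset.mem_univ u, Finset.mem_univ w⟩
  have hGcolk : G.Colorable (k+1) := SimpleGraph.Colorable.mono_left hle hcolk
  have hk0 : k ≠ 0 := by
    rintro rfl
    obtain ⟨C⟩ := hGcolk
    obtain ⟨v0⟩ := hVne
    have hd : 0 < G.degree v0 := by
      have := G.minDegree_le_degree v0; omega
    obtain ⟨w, hw⟩ := (SimpleGraph.degree_pos_iff_exists_adj _ _).mp hd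
    refine C.valid hw (Fin.ext ?_)
    have h1 := (C v0).isLt
    have h2 := (C w).isLt
    omega
  obtain ⟨htne, hdegt⟩ := hprop hk0
  have hχk : (χn : ℝ) ≤ (k:ℝ)+1 := by exact_mod_cast hχle (k+1) hGcolk
  have h5 : ((k:ℝ)+1) ≤ hsum G t := hsum_lower G t k (Nat.one_le_iff_ne_zero.mpr hk0) htne hdegt
  have h7 : hsum G univ = pairSum G hf := hsum_univ G
  have h8 : pairSum G hf ≤ pairSum G rf :=
    pairSum_le G hf rf (fun u w _ => pt_h_le_r (hdeg1 u) (hdeg1 w))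
  have h9 : pairSum G rf ≤ pairSum G (fun u w => (1/δR) * gf u w) :=
    pairSum_le G _ _ (fun u w _ => pt_r_le_ga hδ2 (hdegδ u) (hdegδ w))
  have h10 : pairSum G (fun u w => (1/δR) * gf u w) = (1/δR) * pairSum G gf := by
    rw [pairSum, pairSum, Finset.mul_sum]
    exact Finset.sum_congr rfl fun u _ => by rw [Finset.mul_sum]
  have h11 : 2 * geoArithIndex G = pairSum G gf := two_ga G
  have hRHS : 2 / δR * geoArithIndex G = (1/δR) * pairSum G gf := by
    rw [← h11]; ring
  have hineq : (χn : ℝ) ≤ 2 / δR * geoArithIndex G := by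
    rw [hRHS]; linarith [hχk, h5, hht, h8, h9, h10, h7]
  refine ⟨hineq, ?_, ?_⟩
  · -- equality → complete
    intro heq
    rw [hRHS] at heq
    have hzero : ∀ u : V, ∀ w ∈ G.neighborFinset u, (1/δR) * gf u w - rf u w = 0 := by
      have hnn : ∀ u : V, ∀ w ∈ G.neighborFinset u, 0 ≤ (1/δR) * gf u w - rf u w := by
        intro u w _
        have h := pt_r_le_ga hδ2 (hdegδ u) (hdegδ w)
        simp only [hgf, hrf]
        linarith [h]
      have hsz : ∑ u : V, ∑ w ∈ G.neighborFinset u, ((1/δR) * gf u w - rf u w) = 0 := by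
        have hsplit : ∑ u : V, ∑ w ∈ G.neighborFinset u, ((1/δR) * gf u w - rf u w)
            = pairSum G (fun u w => (1/δR) * gf u w) - pairSum G rf := by
          rw [pairSum, pairSum, ← Finset.sum_sub_distrib]
          exact Finset.sum_congr rfl fun u _ => by rw [← Finset.sum_sub_distrib]
        rw [hsplit, h10]
        have : pairSum G rf = (1/δR) * pairSum G gf := by
          apply le_antisymm (by linarith [h9, h10])
          linarith [hχk, h5, hht, h7, h8, heq]
        rw [this, sub_self]
      have h1 := (Finset.sum_eq_zero_iff_of_nonneg
        (fun u _ => Finset.sum_nonneg (fun w hw => hnn u w hw))).mp hsz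
      intro u w hw
      exact (Finset.sum_eq_zero_iff_of_nonneg (fun w hw => hnn u w hw)).mp
        (h1 u (Finset.mem_univ u)) w hw
    have hreg : ∀ u : V, (G.degree u : ℝ) = δR := by
      intro u
      have hd : 0 < G.degree u := by
        have := G.minDegree_le_degree u; omega
      obtain ⟨w, hw⟩ := (SimpleGraph.degree_pos_iff_exists_adj _ _).mp hd
      have hwmem : w ∈ G.neighborFinset u := (mem_neighborFinset _ _ _).mpr hw
      have h0 := hzero u w hwmem
      have heqp : (1/δR) * gf u w = rf u w := by linarith
      simp only [hgf, hrf] at heqp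
      exact (pt_eq_of_eq hδ2 (hdegδ u) (hdegδ w) heqp).1
    have hval : pairSum G hf = (Fintype.card V : ℝ) := by
      rw [pairSum]
      have hone : ∀ u : V, ∑ w ∈ G.neighborFinset u, hf u w = 1 := by
        intro u
        have hcongr : ∀ w ∈ G.neighborFinset u, hf u w = 1/δR := by
          intro w _
          simp only [hhf]
          rw [hreg u, hreg w]
          rw [div_eq_div_iff (by linarith) (by linarith)]
          ring
        rw [Finset.sum_congr rfl hcongr, Finset.sum_const, nsmul_eq_mul,
          SimpleGraph.card_neighborFinset_eq_degree, hreg u]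
        field_simp
      rw [Finset.sum_congr rfl (fun u _ => hone u), Finset.sum_const, Finset.card_univ,
        nsmul_eq_mul, mul_one]
    have hχeq : (χn:ℝ) = (Fintype.card V : ℝ) := by
      apply le_antisymm
      · exact_mod_cast hχle _ G.colorable_of_fintype
      · linarith [hχk, h5, hht, h7, h8, h9, h10, heq, hval]
    have hχnat : χn = Fintype.card V := by exact_mod_cast hχeq
    have hcomp : ∀ u w : V, u ≠ w → G.Adj u w := by
      by_contra hcon
      push_neg at hcon
      obtain ⟨u, w, hne, hnadj⟩ := hcon
      have C : G.Coloring {x : V // x ≠ w} := SimpleGraph.Coloring.mk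
        (fun x => if hxw : x = w then ⟨u, hne⟩ else ⟨x, hxw⟩) ?_
      case _ =>
        have hcol := C.colorable
        have hcard : Fintype.card {x : V // x ≠ w} = Fintype.card V - 1 := by
          have h := Fintype.card_subtype_compl (fun x : V => x = w)
          rw [Fintype.card_subtype_eq] at h
          exact h
        rw [hcard] at hcol
        have hle2 := hχle _ hcol
        have hc1 : 1 ≤ Fintype.card V := Fintype.card_pos
        omega
      case _ =>
        intro a b hab
        have hne' : a ≠ b := G.ne_of_adj hab
        by_cases ha : a = w <;> by_cases hb : b = w
        · exact absurd (ha.trans hb.symm) hne'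
        · subst ha
          simp only [dif_pos rfl, dif_neg hb]
          intro hcontra
          rw [Subtype.ext_iff] at hcontra
          simp only at hcontra
          subst hcontra
          exact hnadj hab.symm
        · subst hb
          simp only [dif_pos rfl, dif_neg ha]
          intro hcontra
          rw [Subtype.ext_iff] at hcontra
          simp only at hcontra
          subst hcontra
          exact hnadj hab
        · simp only [dif_neg ha, dif_neg hb]
          intro hcontra
          rw [Subtype.ext_iff] at hcontra
          exact hne' hcontra
    refine ⟨⟨Fintype.equivFinOfCardEq hn, ?_⟩⟩
    intro a b
    rw [completeGraph_eq_top, top_adj]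
    constructor
    · intro h
      exact hcomp a b (fun hEq => h (by rw [hEq]))
    · intro h
      exact fun hEq => G.ne_of_adj h ((Fintype.equivFinOfCardEq hn).injective hEq)
  · -- complete → equality
    rintro ⟨iso⟩
    have hcomp : ∀ u w : V, u ≠ w → G.Adj u w := by
      intro u w hne
      have hmap := iso.map_rel_iff (a := u) (b := w)
      have hne2 : iso u ≠ iso w := fun hEq => hne (iso.toEquiv.injective hEq)
      exact hmap.mp hne2
    have hdegall : ∀ u : V, G.degree u = Fintype.card V - 1 := by
      intro u
      rw [← SimpleGraph.card_neighborFinset_eq_degree]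
      have hnb : G.neighborFinset u = univ.erase u := by
        ext w
        rw [mem_neighborFinset, Finset.mem_erase]
        constructor
        · intro h; exact ⟨(G.ne_of_adj h).symm, Finset.mem_univ w⟩
        · rintro ⟨h, -⟩; exact hcomp u w (Ne.symm h)
      rw [hnb, Finset.card_erase_of_mem (Finset.mem_univ u), Finset.card_univ]
    have hmind : G.minDegree = Fintype.card V - 1 := by
      obtain ⟨v, hv⟩ := G.exists_minimal_degree_vertex
      rw [hv, hdegall]
    have hc1 : 1 ≤ Fintype.card V := Fintype.card_pos
    have hcR : (1:ℝ) ≤ (Fintype.card V : ℝ) := by exact_mod_cast hc1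
    have hδval : δR = (Fintype.card V : ℝ) - 1 := by
      rw [hδR, hmind, Nat.cast_sub hc1, Nat.cast_one]
    have hGtop : G = ⊤ := by
      ext u w
      rw [top_adj]
      exact ⟨G.ne_of_adj, hcomp u w⟩
    have hχtop : χn = Fintype.card V := by
      rw [hχn, hGtop, SimpleGraph.chromaticNumber_top, ENat.toNat_coe]
    have hdegR : ∀ u : V, (G.degree u : ℝ) = (Fintype.card V : ℝ) - 1 := fun u => by
      rw [hdegall u, Nat.cast_sub hc1, Nat.cast_one]
    have hm2 : (2:ℝ) ≤ (Fintype.card V : ℝ) - 1 := by rw [← hδval]; exact hδ2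
    have hpair : pairSum G gf = (Fintype.card V : ℝ) * ((Fintype.card V : ℝ) - 1) := by
      rw [pairSum]
      have hone : ∀ u : V, ∑ w ∈ G.neighborFinset u, gf u w = (Fintype.card V : ℝ) - 1 := by
        intro u
        have hcongr : ∀ w ∈ G.neighborFinset u, gf u w = 1 := by
          intro w _
          simp only [hgf]
          rw [hdegR u, hdegR w, Real.sqrt_mul_self (by linarith)]
          rw [div_eq_one_iff_eq (by linarith)]
          ring
        rw [Finset.sum_congr rfl hcongr, Finset.sum_const, nsmul_eq_mul, mul_one,
          SimpleGraph.card_neighborFinset_eq_degree, hdegR u]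
      rw [Finset.sum_congr rfl (fun u _ => hone u), Finset.sum_const, Finset.card_univ,
        nsmul_eq_mul]
    rw [hRHS, hpair, hχtop, hδval]
    field_simp
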